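/- Let u₀, u₁ ∈ ℝ, λ ≠ 0 and ν > 0, and let t > 0. Then, writing x = λ² t² / √(2ν), one has u₀² E_2(x) + 2 u₀ u₁ t · E_{2,2}(x) + 2 u₁² t² · E_{2,3}(x) = −(2^{3/2} ν^{1/2} u₁²/λ²) + (u₀² + 2^{3/2} ν^{1/2} u₁²/λ²) · cosh(|λ| t/(2ν)^{1/4}) + (2^{5/4} ν^{1/4} u₀ u₁/|λ|) · sinh(|λ| t/(2ν)^{1/4}). -/

import Mathlib

/-- The two-parameter Mittag-Leffler function `E_{a,b}(z) = ∑_{k=0}^∞ z^k / Γ(a k + b)`. -/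
noncomputable def mittagLeffler (a b z : ℝ) : ℝ :=
  ∑' k : ℕ, z ^ k / Real.Gamma (a * k + b)

lemma g1 (k : ℕ) : Real.Gamma (2*(k:ℝ)+1) = (Nat.factorial (2*k) : ℝ) := by
  rw [show 2*(k:ℝ)+1 = ((2*k:ℕ):ℝ)+1 by push_cast; ring, Real.Gamma_nat_eq_factorial]

lemma g2 (k : ℕ) : Real.Gamma (2*(k:ℝ)+2) = (Nat.factorial (2*k+1) : ℝ) := by
  rw [show 2*(k:ℝ)+2 = ((2*k+1:ℕ):ℝ)+1 by push_cast; ring, Real.Gamma_nat_eq_factorial]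

lemma g3 (k : ℕ) : Real.Gamma (2*(k:ℝ)+3) = (Nat.factorial (2*k+2) : ℝ) := by
  rw [show 2*(k:ℝ)+3 = ((2*k+2:ℕ):ℝ)+1 by push_cast; ring, Real.Gamma_nat_eq_factorial]

lemma ml1 (s : ℝ) : mittagLeffler 2 1 (s^2) = Real.cosh s := by
  unfold mittagLeffler
  rw [Real.cosh_eq_tsum]
  congr 1; funext k
  rw [g1 k, ← pow_mul]

lemma ml2 (s : ℝ) (hs : s ≠ 0) : mittagLeffler 2 2 (s^2) = Real.sinh s / s := by
  unfold mittagLeffler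
  have h2 : HasSum (fun k : ℕ => (s^2)^k / Real.Gamma (2 * (k:ℝ) + 2)) (s⁻¹ * Real.sinh s) := by
    convert (Real.hasSum_sinh s).mul_left s⁻¹ using 2 with k
    · rfl
    rw [g2 k, ← pow_mul, pow_add]
    field_simp
  rw [h2.tsum_eq, inv_mul_eq_div]

lemma ml3 (s : ℝ) (hs : s ≠ 0) : mittagLeffler 2 3 (s^2) = (Real.cosh s - 1) / s^2 := by
  unfold mittagLeffler
  have h1 : HasSum (fun n : ℕ => s ^ (2*(n+1)) / ((Nat.factorial (2*(n+1)) : ℝ))) (Real.cosh s - 1) := by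
    have := (hasSum_nat_add_iff' (f := fun n : ℕ => s ^ (2*n) / ((Nat.factorial (2*n) : ℝ))) 1).mpr
      (Real.hasSum_cosh s)
    simpa using this
  have h2 : HasSum (fun k : ℕ => (s^2)^k / Real.Gamma (2 * (k:ℝ) + 3)) ((s^2)⁻¹ * (Real.cosh s - 1)) := by
    convert h1.mul_left (s^2)⁻¹ using 2 with k
    · rfl
    rw [g3 k, ← pow_mul, show 2*(k+1) = 2*k+2 by ring, pow_add]
    field_simp
  rw [h2.tsum_eq, inv_mul_eq_div]

theorem swe_second_moment_hyperbolic_form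
    (u₀ u₁ lam ν t : ℝ) (hlam : lam ≠ 0) (hν : 0 < ν) (ht : 0 < t) :
    u₀ ^ 2 * mittagLeffler 2 1 (lam ^ 2 * t ^ 2 / Real.sqrt (2 * ν))
      + 2 * u₀ * u₁ * t * mittagLeffler 2 2 (lam ^ 2 * t ^ 2 / Real.sqrt (2 * ν))
      + 2 * u₁ ^ 2 * t ^ 2 * mittagLeffler 2 3 (lam ^ 2 * t ^ 2 / Real.sqrt (2 * ν)) =
    -((2:ℝ) ^ ((3:ℝ) / 2) * ν ^ ((1:ℝ) / 2) * u₁ ^ 2 / lam ^ 2)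
      + (u₀ ^ 2 + (2:ℝ) ^ ((3:ℝ) / 2) * ν ^ ((1:ℝ) / 2) * u₁ ^ 2 / lam ^ 2) *
          Real.cosh (|lam| * t / (2 * ν) ^ ((1:ℝ) / 4))
      + ((2:ℝ) ^ ((5:ℝ) / 4) * ν ^ ((1:ℝ) / 4) * u₀ * u₁ / |lam|) *
          Real.sinh (|lam| * t / (2 * ν) ^ ((1:ℝ) / 4)) := by
  have h2ν : (0:ℝ) < 2 * ν := by linarith
  set c : ℝ := (2 * ν) ^ ((1:ℝ)/4) with hcdef
  have hc : 0 < c := Real.rpow_pos_of_pos h2ν _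
  have hc2 : c ^ 2 = Real.sqrt (2 * ν) := by
    rw [hcdef, ← Real.rpow_natCast ((2*ν) ^ ((1:ℝ)/4)) 2, ← Real.rpow_mul h2ν.le,
      Real.sqrt_eq_rpow]
    norm_num
  have hlam' : |lam| ≠ 0 := abs_ne_zero.mpr hlam
  set s : ℝ := |lam| * t / c with hsdef
  have hs : s ≠ 0 := by
    rw [hsdef]
    positivity
  obtain ⟨a, ha0, halam⟩ : ∃ a:ℝ, a ≠ 0 ∧ |lam| = a := ⟨|lam|, hlam', rfl⟩
  have hx : lam ^ 2 * t ^ 2 / Real.sqrt (2 * ν) = s ^ 2 := by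
    rw [hsdef, ← hc2, ← sq_abs lam, halam]
    field_simp
  have h32 : (2:ℝ) ^ ((3:ℝ)/2) * ν ^ ((1:ℝ)/2) = 2 * c ^ 2 := by
    rw [hc2, Real.sqrt_eq_rpow, Real.mul_rpow (by norm_num) hν.le,
      show (3:ℝ)/2 = 1 + 1/2 by norm_num, Real.rpow_add (by norm_num)]
    norm_num
    ring
  have h54 : (2:ℝ) ^ ((5:ℝ)/4) * ν ^ ((1:ℝ)/4) = 2 * c := by
    rw [hcdef, Real.mul_rpow (by norm_num) hν.le,
      show (5:ℝ)/4 = 1 + 1/4 by norm_num, Real.rpow_add (by norm_num)]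
    norm_num
    ring
  rw [hx, ml1, ml2 s hs, ml3 s hs, h32, h54, hsdef, ← sq_abs lam, halam]
  rw [halam] at hlam'
  field_simp
  ring
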